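/- Let Q be a bounded quasinilpotent operator on a complex Banach space X, and let z₁, z₂ ∈ B_Q with α, β ≥ 0, α + β = 1. Then α z₁ + β z₂ ∈ B_Q and moreover sup_j ‖(I + (αz₁+βz₂)Q)^j‖ ≤ (sup_j ‖(I+z₁Q)^j‖)·(sup_j ‖(I+z₂Q)^j‖). -/

import Mathlib

theorem powerBounded_convex_combination
    {X : Type*} [NormedAddCommGroup X] [NormedSpace ℂ X] [CompleteSpace X]
    (Q : X →L[ℂ] X) (hQ : spectrum ℂ Q = {0}) (z₁ z₂ : ℂ) (α β : ℝ)
    (hα : 0 ≤ α) (hβ : 0 ≤ β) (hαβ : α + β = 1)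
    (h₁ : BddAbove (Set.range fun j : ℕ => ‖(1 + z₁ • Q) ^ j‖))
    (h₂ : BddAbove (Set.range fun j : ℕ => ‖(1 + z₂ • Q) ^ j‖)) :
    BddAbove (Set.range fun j : ℕ => ‖(1 + ((α : ℂ) * z₁ + (β : ℂ) * z₂) • Q) ^ j‖) ∧
    (⨆ j : ℕ, ‖(1 + ((α : ℂ) * z₁ + (β : ℂ) * z₂) • Q) ^ j‖) ≤
      (⨆ j : ℕ, ‖(1 + z₁ • Q) ^ j‖) * (⨆ j : ℕ, ‖(1 + z₂ • Q) ^ j‖) := by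
  set B := 1 + z₁ • Q with hB
  set C := 1 + z₂ • Q with hC
  set M₁ := ⨆ j : ℕ, ‖B ^ j‖ with hM₁def
  set M₂ := ⨆ j : ℕ, ‖C ^ j‖ with hM₂def
  have hM₁ : ∀ k : ℕ, ‖B ^ k‖ ≤ M₁ := fun k => le_ciSup h₁ k
  have hM₂ : ∀ k : ℕ, ‖C ^ k‖ ≤ M₂ := fun k => le_ciSup h₂ k
  have hM₁0 : 0 ≤ M₁ := le_trans (norm_nonneg _) (hM₁ 0)
  have hM₂0 : 0 ≤ M₂ := le_trans (norm_nonneg _) (hM₂ 0)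
  have hαβℂ : (α : ℂ) + (β : ℂ) = 1 := by exact_mod_cast congrArg (fun r : ℝ => (r : ℂ)) hαβ
  have h0 : Commute (z₁ • Q) (z₂ • Q) := ((Commute.refl Q).smul_right z₂).smul_left z₁
  have hcomm : Commute B C := by
    rw [hB, hC]
    exact ((Commute.one_left _).add_left ((Commute.one_right _).add_right h0))
  have hcomm' : Commute ((α : ℂ) • B) ((β : ℂ) • C) := (hcomm.smul_right _).smul_left _
  have hA : 1 + ((α : ℂ) * z₁ + (β : ℂ) * z₂) • Q = (α : ℂ) • B + (β : ℂ) • C := by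
    have h2 : (α : ℂ) • B + (β : ℂ) • C
        = ((α : ℂ) + (β : ℂ)) • (1 : X →L[ℂ] X) + ((α : ℂ) * z₁ + (β : ℂ) * z₂) • Q := by
      rw [hB, hC]
      simp only [smul_add, smul_smul, add_smul]
      abel
    rw [h2, hαβℂ, one_smul]
  have hαn : ‖(α : ℂ)‖ = α := by
    rw [Complex.norm_real, Real.norm_eq_abs, abs_of_nonneg hα]
  have hβn : ‖(β : ℂ)‖ = β := by
    rw [Complex.norm_real, Real.norm_eq_abs, abs_of_nonneg hβ]
  have key : ∀ j : ℕ, ‖(1 + ((α : ℂ) * z₁ + (β : ℂ) * z₂) • Q) ^ j‖ ≤ M₁ * M₂ := by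
    intro j
    rw [hA, hcomm'.add_pow]
    calc ‖∑ m ∈ Finset.range (j + 1),
            ((α : ℂ) • B) ^ m * ((β : ℂ) • C) ^ (j - m) * (j.choose m : X →L[ℂ] X)‖
        ≤ ∑ m ∈ Finset.range (j + 1),
            ‖((α : ℂ) • B) ^ m * ((β : ℂ) • C) ^ (j - m) * (j.choose m : X →L[ℂ] X)‖ :=
          norm_sum_le _ _
      _ ≤ ∑ m ∈ Finset.range (j + 1),
            (α ^ m * β ^ (j - m) * (j.choose m : ℝ)) * (M₁ * M₂) := by
          apply Finset.sum_le_sum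
          intro m _
          have h1 : ((α : ℂ) • B) ^ m * ((β : ℂ) • C) ^ (j - m) * (j.choose m : X →L[ℂ] X)
              = (j.choose m) • (((α : ℂ) • B) ^ m * ((β : ℂ) • C) ^ (j - m)) := by
            rw [← (Nat.cast_commute (j.choose m)
              (((α : ℂ) • B) ^ m * ((β : ℂ) • C) ^ (j - m))).eq, nsmul_eq_mul]
          rw [h1]
          calc ‖(j.choose m) • (((α : ℂ) • B) ^ m * ((β : ℂ) • C) ^ (j - m))‖
              ≤ (j.choose m : ℝ) * ‖((α : ℂ) • B) ^ m * ((β : ℂ) • C) ^ (j - m)‖ := by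
                simpa using (norm_nsmul_le : ‖(j.choose m) •
                  (((α : ℂ) • B) ^ m * ((β : ℂ) • C) ^ (j - m))‖ ≤ _)
            _ ≤ (j.choose m : ℝ) * (‖((α : ℂ) • B) ^ m‖ * ‖((β : ℂ) • C) ^ (j - m)‖) := by
                gcongr; exact norm_mul_le _ _
            _ = (j.choose m : ℝ) * ((α ^ m * ‖B ^ m‖) * (β ^ (j - m) * ‖C ^ (j - m)‖)) := by
                have e1 := norm_smul ((α : ℂ) ^ m) (B ^ m)
                have e2 := norm_smul ((β : ℂ) ^ (j - m)) (C ^ (j - m))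
                rw [smul_pow, smul_pow, e1, e2, norm_pow (α : ℂ) m, norm_pow (β : ℂ) (j - m), hαn, hβn]
            _ ≤ (j.choose m : ℝ) * ((α ^ m * M₁) * (β ^ (j - m) * M₂)) := by
                refine mul_le_mul_of_nonneg_left ?_ (Nat.cast_nonneg _)
                exact mul_le_mul
                  (mul_le_mul_of_nonneg_left (hM₁ m) (pow_nonneg hα m))
                  (mul_le_mul_of_nonneg_left (hM₂ (j - m)) (pow_nonneg hβ _))
                  (mul_nonneg (pow_nonneg hβ _) (norm_nonneg _))
                  (mul_nonneg (pow_nonneg hα _) hM₁0)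
            _ = (α ^ m * β ^ (j - m) * (j.choose m : ℝ)) * (M₁ * M₂) := by ring
      _ = (α + β) ^ j * (M₁ * M₂) := by rw [← Finset.sum_mul, ← add_pow]
      _ = M₁ * M₂ := by rw [hαβ, one_pow, one_mul]
  refine ⟨⟨M₁ * M₂, ?_⟩, ciSup_le key⟩
  rintro x ⟨j, rfl⟩
  exact key j
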